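/- If ip(d,i) < ip(d′,i′) then S_d[i..] < S_{d′}[i′..] lexicographically. -/
import Mathlib


open List

/-- `MFactor R SA suf U c ip`: `U` is the matching factor of the suffix `suf`
w.r.t. `R` (the longest prefix of `suf` occurring in `R`), `c` is the mismatch
character (the character of `suf` following `U`), and `ip` is the insert point
of `suf` in the suffix array `SA` of `R`: the greatest rank `j` such that `U`
occurs at `SA j` and `R[SA j..] < Uc`, if such a rank exists, and otherwise
the least rank `j` such that `U` occurs at `SA j`. -/
private theorem myTrans {α} [LinearOrder α] : ∀ {a b c : List α}, List.Lex (·<·) a b → List.Lex (·<·) b c → List.Lex (·<·) a c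
  | _, _, _, .nil, .rel _ => .nil
  | _, _, _, .nil, .cons _ => .nil
  | _, _, _, .rel h, .rel h' => .rel (h.trans h')
  | _, _, _, .rel h, .cons _ => .rel h
  | _, _, _, .cons _, .rel h' => .rel h'
  | _, _, _, .cons h, .cons h' => .cons (myTrans h h')

private theorem myIrrefl {α} [LinearOrder α] : ∀ (a : List α), ¬ List.Lex (·<·) a a
  | _, .rel h => lt_irrefl _ h
  | _::l, .cons h => myIrrefl l h

private theorem myAsymm {α} [LinearOrder α] {a b : List α} (h : List.Lex (·<·) a b) (h' : List.Lex (·<·) b a) : False :=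
  myIrrefl a (myTrans h h')

private theorem myTri {α} [LinearOrder α] (a b : List α) : List.Lex (·<·) a b ∨ a = b ∨ List.Lex (·<·) b a :=
  trichotomous a b

private theorem prefixLex {α} [LinearOrder α] : ∀ {X Y : List α}, X <+: Y → X ≠ Y → List.Lex (·<·) X Y := by
  intro X
  induction X with
  | nil => intro Y _ hne; cases Y with
    | nil => exact absurd rfl hne
    | cons b Y' => exact List.Lex.nil
  | cons a X' ih =>
    intro Y hpre hne
    cases Y with
    | nil => exact absurd (List.prefix_nil.mp hpre) hne
    | cons b Y' =>
      rw [List.cons_prefix_cons] at hpre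
      obtain ⟨rfl, h⟩ := hpre
      exact List.Lex.cons (ih h (fun he => hne (by rw [he])))

private theorem sandwich {α} [LinearOrder α] : ∀ {U X Y Z : List α}, U <+: X → U <+: Z →
    List.Lex (·<·) X Y → List.Lex (·<·) Y Z → U <+: Y := by
  intro U
  induction U with
  | nil => intro _ _ _ _ _ _ _; exact List.nil_prefix
  | cons u U' ih =>
    intro X Y Z hX hZ hXY hYZ
    cases X with
    | nil => exact absurd hX (by simp)
    | cons x X'' =>
    cases Z with
    | nil => exact absurd hZ (by simp)
    | cons z Z'' =>
    rw [List.cons_prefix_cons] at hX hZ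
    obtain ⟨rfl, hX'⟩ := hX
    obtain ⟨he, hZ'⟩ := hZ
    cases Y with
    | nil => cases hXY
    | cons y Y' =>
      cases hXY with
      | rel h1 =>
        cases hYZ with
        | rel h2 => exact absurd (h1.trans h2) (by rw [he]; exact lt_irrefl _)
        | cons h2 => exact absurd h1 (by rw [← he]; exact lt_irrefl _)
      | cons h1 =>
        cases hYZ with
        | rel h2 => exact absurd h2 (by rw [he]; exact lt_irrefl _)
        | cons h2 => exact List.cons_prefix_cons.mpr ⟨rfl, ih hX' hZ' h1 h2⟩

private theorem appendLex {α} [LinearOrder α] : ∀ {X Y : List α} (V V' : List α),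
    List.Lex (·<·) X Y → ¬ X <+: Y → List.Lex (·<·) (X ++ V) (Y ++ V') := by
  intro X
  induction X with
  | nil => intro Y _ _ _ hnp; exact absurd List.nil_prefix hnp
  | cons a X' ih =>
    intro Y V V' hlex hnp
    cases Y with
    | nil => cases hlex
    | cons b Y' =>
      cases hlex with
      | rel h => exact List.Lex.rel h
      | cons h =>
        exact List.Lex.cons (ih V V' h (fun hp => hnp (List.cons_prefix_cons.mpr ⟨rfl, hp⟩)))

def MFactor {α : Type*} [LinearOrder α] (R : List α) (SA : ℕ → ℕ)
    (suf U : List α) (c : α) (ip : ℕ) : Prop :=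
  (∃ V, suf = U ++ c :: V) ∧ U <:+: R ∧ ¬ ((U ++ [c]) <:+: R) ∧
  (IsGreatest {j | j < R.length ∧ U <+: R.drop (SA j) ∧
      List.Lex (· < ·) (R.drop (SA j)) (U ++ [c])} ip ∨
   ((∀ j, j < R.length → U <+: R.drop (SA j) →
      ¬ List.Lex (· < ·) (R.drop (SA j)) (U ++ [c])) ∧
    IsLeast {j | j < R.length ∧ U <+: R.drop (SA j)} ip))

/-- If `ip(d,i) < ip(d',i')` then `S_d[i..] < S_{d'}[i'..]` lexicographically. -/
theorem stmt10 {α : Type*} [LinearOrder α] (R : List α) (SA : ℕ → ℕ)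
    (hbij : Set.BijOn SA (Set.Iio R.length) (Set.Iio R.length))
    (hsort : ∀ r r', r < r' → r' < R.length →
      List.Lex (· < ·) (R.drop (SA r)) (R.drop (SA r')))
    (Sd Sd' : List α) (i i' : ℕ)
    (t : α) (hterm : R.getLast? = some t)
    (htS : ∀ a ∈ Sd, t < a) (htS' : ∀ a ∈ Sd', t < a)
    (hSR : ∀ a ∈ Sd, a ∈ R) (hSR' : ∀ a ∈ Sd', a ∈ R)
    (U U' : List α) (c c' : α) (ip ip' : ℕ)
    (h1 : MFactor R SA (Sd.drop i) U c ip)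
    (h2 : MFactor R SA (Sd'.drop i') U' c' ip')
    (hlt : ip < ip') :
    List.Lex (· < ·) (Sd.drop i) (Sd'.drop i') := by
  obtain ⟨⟨V, hV⟩, hUinf, hUcinf, hcase1⟩ := h1
  obtain ⟨⟨V', hV'⟩, hU'inf, hU'cinf, hcase2⟩ := h2
  -- prefix of a suffix of R is an infix of R
  have hinf : ∀ {W : List α} {j : ℕ}, W <+: R.drop j → W <:+: R :=
    fun h => h.isInfix.trans (R.drop_suffix _).isInfix
  -- suffixes of R are never equal to U++[c] or U'++[c'], nor have them as prefixes
  have hneUc : ∀ j : ℕ, R.drop (SA j) ≠ U ++ [c] := by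
    intro j h
    apply hUcinf; apply hinf (j := SA j); rw [h]
  have hneU'c' : ∀ j : ℕ, R.drop (SA j) ≠ U' ++ [c'] := by
    intro j h
    apply hU'cinf; apply hinf (j := SA j); rw [h]
  -- Claim A: any suffix < Uc has rank ≤ ip
  have claimA : ∀ j, j < R.length → List.Lex (·<·) (R.drop (SA j)) (U ++ [c]) → j ≤ ip := by
    intro j hj hlex
    by_contra hcon
    push_neg at hcon
    rcases hcase1 with ⟨⟨hipn, hipU, hiplt⟩, hub⟩ | ⟨hnone, ⟨⟨hipn, hipU⟩, hlb⟩⟩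
    · have h1 : List.Lex (·<·) (R.drop (SA ip)) (R.drop (SA j)) := hsort ip j hcon hj
      have hUj : U <+: R.drop (SA j) := sandwich hipU (List.prefix_append U [c]) h1 hlex
      exact absurd (hub ⟨hj, hUj, hlex⟩) (not_le.mpr hcon)
    · have hnlt : ¬ List.Lex (·<·) (R.drop (SA ip)) (U ++ [c]) := hnone ip hipn hipU
      have h2 : List.Lex (·<·) (U ++ [c]) (R.drop (SA ip)) := by
        rcases myTri (R.drop (SA ip)) (U ++ [c]) with h | h | h
        · exact absurd h hnlt
        · exact absurd h (hneUc ip)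
        · exact h
      exact myAsymm hlex (myTrans h2 (hsort ip j hcon hj))
  -- Claim B: any suffix > U'c' has rank ≥ ip'
  have claimB : ∀ j, j < R.length → List.Lex (·<·) (U' ++ [c']) (R.drop (SA j)) → ip' ≤ j := by
    intro j hj hlex
    by_contra hcon
    push_neg at hcon
    rcases hcase2 with ⟨⟨hipn', hipU', hiplt'⟩, hub'⟩ | ⟨hnone', ⟨⟨hipn', hipU'⟩, hlb'⟩⟩
    · exact myAsymm hlex (myTrans (hsort j ip' hcon hipn') hiplt')
    · have hUj : U' <+: R.drop (SA j) :=
        sandwich (List.prefix_append U' [c']) hipU' hlex (hsort j ip' hcon hipn')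
      exact absurd (hlb' ⟨hj, hUj⟩) (not_le.mpr hcon)
  -- Main comparison: Uc < U'c'
  have hgood : List.Lex (·<·) (U ++ [c]) (U' ++ [c']) := by
    rcases myTri (U ++ [c]) (U' ++ [c']) with h | heq | hbad
    · exact h
    · -- equal: then the two insert point specs coincide, so ip = ip', contradiction
      obtain ⟨rfl, hc⟩ := List.append_inj' heq (by simp)
      have hc : c = c' := by simpa using hc
      subst hc
      rcases hcase1 with hg1 | hl1 <;> rcases hcase2 with hg2 | hl2
      · exact absurd (hg1.unique hg2) (Nat.ne_of_lt hlt)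
      · exact absurd hg1.1.2.2 (hl2.1 ip hg1.1.1 hg1.1.2.1)
      · exact absurd hg2.1.2.2 (hl1.1 ip' hg2.1.1 hg2.1.2.1)
      · exact absurd (hl1.2.unique hl2.2) (Nat.ne_of_lt hlt)
    · -- U'c' < Uc: derive contradiction
      exfalso
      rcases hcase2 with ⟨⟨hipn', hipU', hiplt'⟩, hub'⟩ | ⟨hnone', ⟨⟨hipn', hipU'⟩, hlb'⟩⟩
      · -- h2 greatest: drop(SA ip') < U'c' < Uc, so ip' ≤ ip by claim A
        exact absurd (claimA ip' hipn' (myTrans hiplt' hbad)) (not_le.mpr hlt)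
      · -- h2 least
        have hY : List.Lex (·<·) (U' ++ [c']) (R.drop (SA ip')) := by
          rcases myTri (R.drop (SA ip')) (U' ++ [c']) with h | h | h
          · exact absurd h (hnone' ip' hipn' hipU')
          · exact absurd h (hneU'c' ip')
          · exact h
        rcases hcase1 with ⟨⟨hipn, hipU, hiplt⟩, hub⟩ | ⟨hnone, ⟨⟨hipn, hipU⟩, hlb⟩⟩
        · -- h1 greatest
          have hnotpre : ¬ U' <+: R.drop (SA ip) := by
            intro hp
            exact absurd (hlb' ⟨hipn, hp⟩) (not_le.mpr hlt)
          rcases myTri (R.drop (SA ip)) (U' ++ [c']) with hXlt | hXeq | hXgt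
          · -- drop(SA ip) < U'c' < Uc
            -- then Uc < drop(SA ip') by claim A contrapositive
            have hUcY : List.Lex (·<·) (U ++ [c]) (R.drop (SA ip')) := by
              rcases myTri (R.drop (SA ip')) (U ++ [c]) with h | h | h
              · exact absurd (claimA ip' hipn' h) (not_le.mpr hlt)
              · exact absurd h (hneUc ip')
              · exact h
            -- sandwich: U' <+: U'c' and U' <+: drop(SA ip'), U'c' < Uc < drop(SA ip')
            have hU'Uc : U' <+: U ++ [c] :=
              sandwich (List.prefix_append U' [c']) hipU' hbad hUcY
            rcases le_or_gt U'.length U.length with hle | hgt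
            · have : U' <+: U :=
                List.prefix_of_prefix_length_le hU'Uc (List.prefix_append U [c]) hle
              exact hnotpre (this.trans hipU)
            · have hlen : U'.length = (U ++ [c]).length := by
                have := hU'Uc.length_le
                simp only [List.length_append, List.length_singleton] at this ⊢
                omega
              have : U' = U ++ [c] := hU'Uc.eq_of_length hlen
              exact hUcinf (this ▸ hU'inf)
          · exact absurd hXeq (hneU'c' ip)
          · -- U'c' < drop(SA ip) < drop(SA ip'), sandwich gives U' <+: drop(SA ip)
            exact hnotpre
              (sandwich (List.prefix_append U' [c']) hipU' hXgt (hsort ip ip' hlt hipn'))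
        · -- h1 least: Uc < drop(SA ip)
          have hX : List.Lex (·<·) (U ++ [c]) (R.drop (SA ip)) := by
            rcases myTri (R.drop (SA ip)) (U ++ [c]) with h | h | h
            · exact absurd h (hnone ip hipn hipU)
            · exact absurd h (hneUc ip)
            · exact h
          have hU'X : U' <+: R.drop (SA ip) :=
            sandwich (List.prefix_append U' [c']) hipU' (myTrans hbad hX)
              (hsort ip ip' hlt hipn')
          exact absurd (hlb' ⟨hipn, hU'X⟩) (not_le.mpr hlt)
  -- conclude
  have hnp : ¬ (U ++ [c]) <+: (U' ++ [c']) := by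
    intro hp
    rcases le_or_gt (U ++ [c]).length U'.length with hle | hgt
    · exact hUcinf ((List.prefix_of_prefix_length_le hp (List.prefix_append U' [c'])
        hle).isInfix.trans hU'inf)
    · have hlen : (U ++ [c]).length = (U' ++ [c']).length := by
        have := hp.length_le
        simp only [List.length_append, List.length_singleton] at this hgt ⊢
        omega
      exact myIrrefl _ ((hp.eq_of_length hlen) ▸ hgood)
  rw [hV, hV']
  have e1 : U ++ c :: V = (U ++ [c]) ++ V := by simp
  have e2 : U' ++ c' :: V' = (U' ++ [c']) ++ V' := by simp
  rw [e1, e2]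
  exact appendLex V V' hgood hnp
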